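/- Algebraic core of the relation log Z ∝ c_r/a^{1/3} for massive IIA quivers: Let I range over a finite index set, let Δ_I, 𝔫_I and G₀ be real numbers satisfying the two constraints π·G₀ + Σ_I(Δ_I − π) = 0 and G₀ + Σ_I(𝔫_I − 1) = 0. Then Σ_I [ (3/π)·F(Δ_I) + (𝔫_I − Δ_I/π)·F′(Δ_I) ] = (π²/2)·[ G₀ + Σ_I (𝔫_I − 1)·(Δ_I/π − 1)² ]. -/

import Mathlib

open Real

/-- `F(u) = u³/6 − π u²/2 + π² u/3`, the paper's function `F = g₊`. -/
noncomputable def F (u : ℝ) : ℝ := u ^ 3 / 6 - π * u ^ 2 / 2 + π ^ 2 * u / 3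

/-- `F′(u) = u²/2 − π u + π²/3`, the derivative of `F`. -/
noncomputable def Fprime (u : ℝ) : ℝ := u ^ 2 / 2 - π * u + π ^ 2 / 3

/-- Algebraic core of the relation `log Z ∝ c_r/a^{1/3}` for massive IIA
quivers: under `π·G₀ + Σ_I(Δ_I − π) = 0` and `G₀ + Σ_I(𝔫_I − 1) = 0`,
`Σ_I [(3/π)F(Δ_I) + (𝔫_I − Δ_I/π)F′(Δ_I)] = (π²/2)[G₀ + Σ_I(𝔫_I − 1)(Δ_I/π − 1)²]`. -/
theorem stmt17 {ι : Type*} [Fintype ι] (G₀ : ℝ) (Δ m : ι → ℝ)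
    (h1 : π * G₀ + ∑ i, (Δ i - π) = 0)
    (h2 : G₀ + ∑ i, (m i - 1) = 0) :
    ∑ i, (3 / π * F (Δ i) + (m i - Δ i / π) * Fprime (Δ i))
      = π ^ 2 / 2 * (G₀ + ∑ i, (m i - 1) * (Δ i / π - 1) ^ 2) := by
  have hπ : (π : ℝ) ≠ 0 := pi_ne_zero
  have e : ∑ i, (3 / π * F (Δ i) + (m i - Δ i / π) * Fprime (Δ i))
      = ∑ i, (π ^ 2 / 2 * ((m i - 1) * (Δ i / π - 1) ^ 2)
          + (-π / 3 * (Δ i - π) - π ^ 2 / 6 * (m i - 1))) := by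
    refine Finset.sum_congr rfl fun i _ => ?_
    unfold F Fprime
    field_simp [F, Fprime]
    ring
  rw [e, Finset.sum_add_distrib, ← Finset.mul_sum]
  have e2 : ∑ i, (-π / 3 * (Δ i - π) - π ^ 2 / 6 * (m i - 1))
      = -π / 3 * ∑ i, (Δ i - π) - π ^ 2 / 6 * ∑ i, (m i - 1) := by
    rw [Finset.mul_sum, Finset.mul_sum, ← Finset.sum_sub_distrib]
  rw [e2]
  linear_combination (-π / 3) * h1 + (-π ^ 2 / 6) * h2
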